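/- Let m ≥ 1 be a natural number. Define ψ₁(x) = ∑_{k=0}^∞ 1/(x+k)² for x > 0, τ(ν) = m + ν + 2, and D(ν) = −( (2m/ν)·(τ(ν)+2)/(τ(ν)(τ(ν)−2)) + ψ₁((ν+m)/2) − ψ₁(ν/2) ). Then D(ν) = O(ν^{-3}) as ν → +∞; that is, there exist constants K > 0 and ν₀ such that |D(ν)| ≤ K ν^{-3} for all ν ≥ ν₀. -/

import Mathlib

open Filter Topology

noncomputable def psi1 (x : ℝ) : ℝ := ∑' k : ℕ, 1 / (x + k) ^ 2

lemma tel_hasSum (g : ℕ → ℝ) (hmono : ∀ k, g (k+1) ≤ g k)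
    (hlim : Tendsto g atTop (𝓝 0)) :
    HasSum (fun k => g k - g (k+1)) (g 0) := by
  rw [hasSum_iff_tendsto_nat_of_nonneg (fun k => sub_nonneg.2 (hmono k))]
  have : (fun n => ∑ i ∈ Finset.range n, (g i - g (i+1))) = fun n => g 0 - g n := by
    funext n; exact Finset.sum_range_sub' g n
  rw [this]
  simpa using tendsto_const_nhds.sub hlim

lemma psi1_expand (x : ℝ) (hx : 0 < x) :
    ∃ s : ℝ, psi1 x = 1/x + 1/(2*x^2) + s ∧ 0 ≤ s ∧ s ≤ 1/(2*x^3) := by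
  have hu : ∀ k : ℕ, 0 < x + k := fun k => by positivity
  have htend : Tendsto (fun k : ℕ => x + (k:ℝ)) atTop atTop :=
    tendsto_atTop_add_const_left _ x tendsto_natCast_atTop_atTop
  -- first telescoping sum
  have h1 : HasSum (fun k : ℕ => 1/((x+k)*(x+(k:ℝ)+1))) (1/x) := by
    have ht := tel_hasSum (fun k : ℕ => 1/(x+k))
      (fun k => by
        have h1 := hu k
        apply one_div_le_one_div_of_le h1
        push_cast; linarith)
      (by simpa only [one_div, Pi.inv_def] using htend.inv_tendsto_atTop)
    have hfun : (fun k : ℕ => (fun k : ℕ => 1/(x+(k:ℝ))) k - (fun k : ℕ => 1/(x+(k:ℝ))) (k+1))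
        = fun k : ℕ => 1/((x+(k:ℝ))*(x+k+1)) := by
      funext k
      have h1 := hu k
      have h2 : (0:ℝ) < x + k + 1 := by linarith
      push_cast
      rw [show x + ((k:ℝ)+1) = x + k + 1 by ring,
        div_sub_div _ _ (ne_of_gt h1) (ne_of_gt h2), div_eq_div_iff (by positivity) (by positivity)]
      ring
    rw [hfun] at ht
    simpa using ht
  -- second telescoping sum
  have h2 : HasSum (fun k : ℕ => 1/(2*(x+k)^2) - 1/(2*(x+(k:ℝ)+1)^2)) (1/(2*x^2)) := by
    have htend2 : Tendsto (fun k : ℕ => 2*(x+(k:ℝ))^2) atTop atTop := by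
      apply Filter.tendsto_atTop_mono (f := fun k : ℕ => (k:ℝ))
      · intro k
        have hk2 : (k:ℝ) ≤ (k:ℝ)^2 := by exact_mod_cast Nat.le_self_pow (by norm_num) k
        have hkk : (k:ℝ)^2 ≤ (x+(k:ℝ))^2 := by nlinarith [hu k, Nat.cast_nonneg (α := ℝ) k]
        linarith
      · exact tendsto_natCast_atTop_atTop
    have ht := tel_hasSum (fun k : ℕ => 1/(2*(x+k)^2))
      (fun k => by
        have h1 := hu k
        apply one_div_le_one_div_of_le (by positivity)
        push_cast
        nlinarith)
      (by simpa only [one_div, Pi.inv_def] using htend2.inv_tendsto_atTop)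
    have hfun : (fun k : ℕ => (fun k : ℕ => 1/(2*(x+(k:ℝ))^2)) k - (fun k : ℕ => 1/(2*(x+(k:ℝ))^2)) (k+1))
        = fun k : ℕ => 1/(2*(x+(k:ℝ))^2) - 1/(2*(x+(k:ℝ)+1)^2) := by
      funext k; push_cast; ring_nf
    rw [hfun] at ht
    simpa using ht
  -- summability of the third-order tail
  have hS2le : ∀ k : ℕ, 1/(2*(x+k)^2*(x+(k:ℝ)+1)^2) ≤ (1/(2*x*(x+1))) * (1/((x+k)*(x+(k:ℝ)+1))) := by
    intro k
    have h1 := hu k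
    have h2 : (0:ℝ) < x + k + 1 := by linarith
    have hx1 : (0:ℝ) < x + 1 := by linarith
    have hk : x ≤ x + k := le_add_of_nonneg_right (Nat.cast_nonneg k)
    rw [div_mul_div_comm, one_mul, div_le_div_iff₀ (by positivity) (by positivity)]
    have hA : x*(x+1) ≤ (x+k)*(x+k+1) := by nlinarith
    nlinarith [mul_le_mul_of_nonneg_right hA (le_of_lt (mul_pos h1 h2))]
  have hS2nn : ∀ k : ℕ, 0 ≤ 1/(2*(x+k)^2*(x+(k:ℝ)+1)^2) := by
    intro k; have := hu k; positivity
  have hS2sum : Summable (fun k : ℕ => 1/(2*(x+k)^2*(x+(k:ℝ)+1)^2)) :=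
    Summable.of_nonneg_of_le hS2nn hS2le (h1.summable.mul_left _)
  set s := ∑' k : ℕ, 1/(2*(x+k)^2*(x+(k:ℝ)+1)^2) with hs
  have hS2 : HasSum (fun k : ℕ => 1/(2*(x+k)^2*(x+(k:ℝ)+1)^2)) s := hS2sum.hasSum
  have hS1 : HasSum (fun k : ℕ => 1/((x+k)^2*(x+(k:ℝ)+1))) (1/(2*x^2) + s) := by
    have hadd := h2.add hS2
    convert hadd using 2 with k
    have h1 := hu k
    have h2 : (0:ℝ) < x + k + 1 := by linarith
    field_simp
    ring
  have hpsi : HasSum (fun k : ℕ => 1/(x+(k:ℝ))^2) (1/x + (1/(2*x^2) + s)) := by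
    have hadd := h1.add hS1
    convert hadd using 2 with k
    have h1 := hu k
    have h2 : (0:ℝ) < x + k + 1 := by linarith
    field_simp
  refine ⟨s, ?_, ?_, ?_⟩
  · rw [psi1, hpsi.tsum_eq]; ring
  · exact tsum_nonneg hS2nn
  · calc s ≤ ∑' k : ℕ, (1/(2*x*(x+1))) * (1/((x+k)*(x+(k:ℝ)+1))) :=
        Summable.tsum_le_tsum hS2le hS2sum (h1.summable.mul_left _)
      _ = (1/(2*x*(x+1))) * (1/x) := by
        rw [tsum_mul_left, h1.tsum_eq]
      _ ≤ 1/(2*x^3) := by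
        rw [div_mul_div_comm, one_mul, div_le_div_iff₀ (by positivity) (by positivity)]
        nlinarith

theorem stmt14 (m : ℕ) (hm : 1 ≤ m) :
    ∃ K > (0 : ℝ), ∃ ν₀ : ℝ, ∀ ν ≥ ν₀,
      |-(2 * (m : ℝ) / ν * (((m : ℝ) + ν + 2) + 2) /
            (((m : ℝ) + ν + 2) * (((m : ℝ) + ν + 2) - 2)) +
          psi1 ((ν + m) / 2) - psi1 (ν / 2))| ≤ K / ν ^ 3 := by
  have hm' : (1:ℝ) ≤ m := by exact_mod_cast hm
  refine ⟨10*m + 4, by positivity, max 1 m, fun ν hν => ?_⟩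
  have hν1 : (1:ℝ) ≤ ν := le_trans (le_max_left _ _) hν
  have hνm : (m:ℝ) ≤ ν := le_trans (le_max_right _ _) hν
  have hν0 : (0:ℝ) < ν := by linarith
  have hm0 : (0:ℝ) < m := by linarith
  have hνm0 : (0:ℝ) < ν + m := by linarith
  have hνne : ν ≠ 0 := ne_of_gt hν0
  have hνmne : ν + (m:ℝ) ≠ 0 := ne_of_gt hνm0
  obtain ⟨s1, he1, hs1nn, hs1le⟩ := psi1_expand (ν/2) (by positivity)
  obtain ⟨s2, he2, hs2nn, hs2le⟩ := psi1_expand ((ν+m)/2) (by positivity)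
  rw [he1, he2]
  have hs1le4 : s1 ≤ 4/ν^3 := by
    have h : 1/(2*(ν/2)^3) = 4/ν^3 := by
      rw [div_pow]; field_simp; ring
    linarith [h ▸ hs1le]
  have hs2le4 : s2 ≤ 4/ν^3 := by
    have hle : (ν/2)^3 ≤ ((ν+m)/2)^3 :=
      pow_le_pow_left₀ (by positivity) (by linarith) 3
    have h : 1/(2*((ν+m)/2)^3) ≤ 1/(2*(ν/2)^3) :=
      one_div_le_one_div_of_le (by positivity) (by linarith)
    have h2 : 1/(2*(ν/2)^3) = 4/ν^3 := by
      rw [div_pow]; field_simp; ring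
    linarith [h2 ▸ (hs2le.trans h)]
  have e1 : 1/((ν+(m:ℝ))/2) = 2/(ν+m) := one_div_div _ _
  have e2 : 1/(ν/2) = 2/ν := one_div_div _ _
  have e3 : 1/(2*((ν+(m:ℝ))/2)^2) = 2/(ν+m)^2 := by
    rw [div_pow]; field_simp
  have e4 : 1/(2*(ν/2)^2) = 2/ν^2 := by
    rw [div_pow]; field_simp
  rw [e1, e2, e3, e4]
  have hτ0 : (0:ℝ) < (m:ℝ) + ν + 2 := by linarith
  have hτ2ne : ((m:ℝ) + ν + 2) - 2 ≠ 0 := by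
    intro h; apply hνmne; linarith [h]
  have hτne : ((m:ℝ) + ν + 2) ≠ 0 := ne_of_gt hτ0
  have hνm2 : (0:ℝ) < ν + m + 2 := by linarith
  have hrat : 2 * (m : ℝ) / ν * (((m : ℝ) + ν + 2) + 2) /
          (((m : ℝ) + ν + 2) * (((m : ℝ) + ν + 2) - 2)) + (2/(ν+m) - 2/ν)
        = 4*m/(ν*(ν+m)*(ν+m+2)) := by
    field_simp
    ring
  have habs : -(2 * (m : ℝ) / ν * (((m : ℝ) + ν + 2) + 2) /
          (((m : ℝ) + ν + 2) * (((m : ℝ) + ν + 2) - 2)) +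
        (2/(ν+m) + 2/(ν+m)^2 + s2) - (2/ν + 2/ν^2 + s1))
      = -(4*m/(ν*(ν+m)*(ν+m+2)) + (2/(ν+m)^2 - 2/ν^2) + (s2 - s1)) := by
    rw [← hrat]; ring
  rw [habs, abs_neg]
  have b1 : |(4:ℝ)*m/(ν*(ν+m)*(ν+m+2))| ≤ 4*m/ν^3 := by
    rw [abs_of_nonneg (by positivity)]
    apply div_le_div_of_nonneg_left (by positivity) (by positivity)
    have h2 : ν*ν ≤ (ν+↑m)*(ν+↑m+2) := by nlinarith
    calc ν^3 = ν*(ν*ν) := by ring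
      _ ≤ ν*((ν+↑m)*(ν+↑m+2)) := by
          apply mul_le_mul_of_nonneg_left h2 hν0.le
      _ = ν*(ν+↑m)*(ν+↑m+2) := by ring
  have b2 : |2/(ν+(m:ℝ))^2 - 2/ν^2| ≤ 6*m/ν^3 := by
    have he : 2/(ν+(m:ℝ))^2 - 2/ν^2 = -(2*m*(2*ν+m)/(ν^2*(ν+m)^2)) := by
      field_simp; ring
    rw [he, abs_neg, abs_of_nonneg (by positivity)]
    rw [div_le_div_iff₀ (by positivity) (by positivity)]
    have key : 6*↑m*(ν^2*(ν+↑m)^2) - 2*↑m*(2*ν+↑m)*ν^3 = 2*↑m*ν^2*(ν^2+5*ν*↑m+3*↑m^2) := by ring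
    have pos : (0:ℝ) ≤ 2*↑m*ν^2*(ν^2+5*ν*↑m+3*↑m^2) := by positivity
    linarith [key, pos]
  have b3 : |s2 - s1| ≤ 4/ν^3 := by
    rw [abs_sub_le_iff]
    constructor <;> linarith
  calc |(4:ℝ)*m/(ν*(ν+m)*(ν+m+2)) + (2/(ν+m)^2 - 2/ν^2) + (s2 - s1)|
      ≤ |(4:ℝ)*m/(ν*(ν+m)*(ν+m+2))| + |2/(ν+(m:ℝ))^2 - 2/ν^2| + |s2 - s1| :=
        abs_add_three _ _ _
    _ ≤ 4*m/ν^3 + 6*m/ν^3 + 4/ν^3 := by linarith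
    _ = (10*m+4)/ν^3 := by ring
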